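/- Let N ∈ ℕ, 1 ≤ n⁺ ≤ N, α ∈ (0,1), v > 0, let W⁺ be a probability weighting function, h⁺ the gain decision weights, J the transitional index, and y* the vector defined by y*_j = Y for 1 ≤ j ≤ J and y*_j = ( J·h⁺_j / ∑_{j'=1}^{J} h⁺_{j'} )^{α/(1−α)}·Y for J+1 ≤ j ≤ n⁺, where Y = v·(∑_{j'=1}^{J} h⁺_{j'})^{α/(1−α)} / [ (∑_{j'=1}^{J} h⁺_{j'})^{1/(1−α)} + J^{α/(1−α)}·∑_{j'=J+1}^{n⁺} (h⁺_{j'})^{1/(1−α)} ]. Write b̄ = 1/α and define μ_j = −(b̄/v)·(∑_{j'=1}^{n⁺} (y*_{j'})^{b̄})·(∑_{j'=j}^{n⁺} h⁺_{j'}) + b̄·∑_{j'=j}^{n⁺} (y*_{j'})^{b̄−1} for j ∈ {1,…,n⁺} and Λ = −(b̄/v)·∑_{j'=1}^{n⁺} (y*_{j'})^{b̄}. Then (y*, μ, Λ) satisfies the KKT conditions of the gain subproblem: (a) for every j ∈ {1,…,n⁺−1}, b̄·(y*_j)^{b̄−1} + μ_{j+1} − μ_j + Λ·h⁺_j = 0;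 (b) b̄·(y*_{n⁺})^{b̄−1} − μ_{n⁺} + Λ·h⁺_{n⁺} = 0; (c) μ_{j+1}·(y*_j − y*_{j+1}) = 0 for every j ∈ {1,…,n⁺−1} and μ_1·y*_1 = 0; (d) ∑_{j=1}^{n⁺} h⁺_j·y*_j = v; (e) μ_j ≥ 0 for every j and 0 ≤ y*_1 ≤ y*_2 ≤ … ≤ y*_{n⁺}. -/

import Mathlib

open Finset

/-- An inverse S-shaped function on `[0,1]`: strictly increasing, continuously
differentiable, with a derivative strictly decreasing then strictly increasing. -/
def InverseSShaped (W : ℝ → ℝ) : Prop :=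
  StrictMonoOn W (Set.Icc (0 : ℝ) 1) ∧
  ContDiffOn ℝ 1 W (Set.Icc (0 : ℝ) 1) ∧
  ∃ x₀ ∈ Set.Icc (0 : ℝ) 1,
    StrictAntiOn (deriv W) (Set.Icc (0 : ℝ) x₀) ∧ StrictMonoOn (deriv W) (Set.Icc x₀ 1)

/-- A probability weighting function: inverse S-shaped with `W 0 = 0` and `W 1 = 1`. -/
def IsPWF (W : ℝ → ℝ) : Prop :=
  InverseSShaped W ∧ W 0 = 0 ∧ W 1 = 1

/-- Gain decision weights: `h⁺_j = W⁺((n−j+1)/N) − W⁺((n−j)/N)` for `j = 1,…,n`. -/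
noncomputable def gainW (W : ℝ → ℝ) (N n j : ℕ) : ℝ :=
  W (((n : ℝ) - j + 1) / N) - W (((n : ℝ) - j) / N)

/-- The transitional index
`J = min{ j ∈ {1,…,n} : j = n ∨ j·h⁺_{j+1} ≥ ∑_{j'≤j} h⁺_{j'} }`. -/
noncomputable def transIdx (W : ℝ → ℝ) (N n : ℕ) : ℕ :=
  sInf {j : ℕ | 1 ≤ j ∧ j ≤ n ∧
    (j = n ∨ ∑ j' ∈ Finset.Icc 1 j, gainW W N n j' ≤ (j : ℝ) * gainW W N n (j + 1))}

/-- Feasibility for the gain subproblem: `0 ≤ y_1 ≤ … ≤ y_n` and `∑ h⁺_j y_j = v`. -/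
def GainFeasible (W : ℝ → ℝ) (N n : ℕ) (v : ℝ) (y : ℕ → ℝ) : Prop :=
  0 ≤ y 1 ∧ (∀ j ∈ Finset.Icc 1 (n - 1), y j ≤ y (j + 1)) ∧
  ∑ j ∈ Finset.Icc 1 n, gainW W N n j * y j = v

/-- The constant `Y` of the candidate optimal solution of the gain subproblem. -/
noncomputable def gainY (W : ℝ → ℝ) (N n : ℕ) (α v : ℝ) : ℝ :=
  v * (∑ j' ∈ Finset.Icc 1 (transIdx W N n), gainW W N n j') ^ (α / (1 - α)) /
    ((∑ j' ∈ Finset.Icc 1 (transIdx W N n), gainW W N n j') ^ ((1 : ℝ) / (1 - α)) +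
      (transIdx W N n : ℝ) ^ (α / (1 - α)) *
        ∑ j' ∈ Finset.Icc (transIdx W N n + 1) n, gainW W N n j' ^ ((1 : ℝ) / (1 - α)))

/-- The candidate optimal solution `y*` of the gain subproblem. -/
noncomputable def gainOpt (W : ℝ → ℝ) (N n : ℕ) (α v : ℝ) : ℕ → ℝ := fun j =>
  if j ≤ transIdx W N n then gainY W N n α v
  else ((transIdx W N n : ℝ) * gainW W N n j /
      ∑ j' ∈ Finset.Icc 1 (transIdx W N n), gainW W N n j') ^ (α / (1 - α)) * gainY W N n α v

section KKTaux

lemma KKTaux_gainW_pos (W : ℝ → ℝ) (N n : ℕ) (hW : IsPWF W) (hnN : n ≤ N) (hN : 0 < N)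
    {j : ℕ} (hj1 : 1 ≤ j) (hjn : j ≤ n) : 0 < gainW W N n j := by
  have hNR : (0:ℝ) < N := by exact_mod_cast hN
  have hjn' : (j:ℝ) ≤ n := by exact_mod_cast hjn
  have hj1' : (1:ℝ) ≤ j := by exact_mod_cast hj1
  have hnN' : (n:ℝ) ≤ N := by exact_mod_cast hnN
  have h1 : ((n:ℝ) - j) / N ∈ Set.Icc (0:ℝ) 1 := by
    constructor
    · apply div_nonneg (by linarith) hNR.le
    · rw [div_le_one hNR]; linarith
  have h2 : ((n:ℝ) - j + 1) / N ∈ Set.Icc (0:ℝ) 1 := by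
    constructor
    · apply div_nonneg (by linarith) hNR.le
    · rw [div_le_one hNR]; linarith
  have hlt : ((n:ℝ) - j) / N < ((n:ℝ) - j + 1) / N := by
    exact (div_lt_div_iff_of_pos_right hNR).mpr (by linarith)
  have := hW.1.1 h1 h2 hlt
  simpa [gainW] using sub_pos.mpr this

lemma KKTaux_mvt (W : ℝ → ℝ) (hW : IsPWF W) {a b : ℝ} (hab : a < b) (h0 : 0 ≤ a) (h1 : b ≤ 1) :
    ∃ c ∈ Set.Ioo a b, W b - W a = deriv W c * (b - a) := by
  have hcont : ContinuousOn W (Set.Icc a b) :=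
    (hW.1.2.1.continuousOn).mono (Set.Icc_subset_Icc h0 h1)
  have hderiv : ∀ x ∈ Set.Ioo a b, HasDerivAt W (deriv W x) x := by
    intro x hx
    have hx01 : x ∈ Set.Ioo (0:ℝ) 1 := ⟨lt_of_le_of_lt h0 hx.1, lt_of_lt_of_le hx.2 h1⟩
    exact ((hW.1.2.1.differentiableOn one_ne_zero).differentiableAt
      (Icc_mem_nhds hx01.1 hx01.2)).hasDerivAt
  obtain ⟨c, hc, hc'⟩ := exists_hasDerivAt_eq_slope W (deriv W) hab hcont hderiv
  refine ⟨c, hc, ?_⟩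
  rw [hc']
  have : b - a ≠ 0 := by linarith
  field_simp

lemma KKTaux_transIdx_mem (W : ℝ → ℝ) (N n : ℕ) (hn1 : 1 ≤ n) :
    1 ≤ transIdx W N n ∧ transIdx W N n ≤ n ∧
      (transIdx W N n = n ∨
        ∑ j' ∈ Finset.Icc 1 (transIdx W N n), gainW W N n j' ≤
          (transIdx W N n : ℝ) * gainW W N n (transIdx W N n + 1)) := by
  have h : transIdx W N n ∈ {j : ℕ | 1 ≤ j ∧ j ≤ n ∧
      (j = n ∨ ∑ j' ∈ Finset.Icc 1 j, gainW W N n j' ≤ (j : ℝ) * gainW W N n (j + 1))} := by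
    rw [transIdx]; exact Nat.sInf_mem ⟨n, hn1, le_rfl, Or.inl rfl⟩
  exact h

lemma KKTaux_transIdx_min (W : ℝ → ℝ) (N n : ℕ) (hn1 : 1 ≤ n) {j : ℕ} (hj1 : 1 ≤ j)
    (hjJ : j < transIdx W N n) :
    (j : ℝ) * gainW W N n (j + 1) < ∑ j' ∈ Finset.Icc 1 j, gainW W N n j' := by
  have hmem : j ∉ {j : ℕ | 1 ≤ j ∧ j ≤ n ∧
      (j = n ∨ ∑ j' ∈ Finset.Icc 1 j, gainW W N n j' ≤ (j : ℝ) * gainW W N n (j + 1))} := by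
    rw [transIdx] at hjJ; exact Nat.notMem_of_lt_sInf hjJ
  by_contra hc
  push_neg at hc
  have hJn := (KKTaux_transIdx_mem W N n hn1).2.1
  exact hmem ⟨hj1, by omega, Or.inr hc⟩

-- quasiconvexity step
lemma KKTaux_gainW_step (W : ℝ → ℝ) (N n : ℕ) (hW : IsPWF W) (hnN : n ≤ N) (hN : 0 < N)
    {j : ℕ} (hj1 : 1 ≤ j) (hj2 : j + 2 ≤ n)
    (hle : gainW W N n j ≤ gainW W N n (j + 1)) :
    gainW W N n (j + 1) ≤ gainW W N n (j + 2) := by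
  by_contra hc
  push_neg at hc
  -- notation: p k = ((n:ℝ) - j - 2 + k)/N
  have hNR : (0:ℝ) < N := by exact_mod_cast hN
  set p : ℕ → ℝ := fun k => ((n:ℝ) - j - 2 + k) / N with hp
  have hjn' : (j:ℝ) + 2 ≤ n := by exact_mod_cast hj2
  have hnN' : (n:ℝ) ≤ N := by exact_mod_cast hnN
  have hj1' : (1:ℝ) ≤ j := by exact_mod_cast hj1
  have hpmono : ∀ k l : ℕ, k < l → p k < p l := by
    intro k l hkl
    have : (k:ℝ) < l := by exact_mod_cast hkl
    exact (div_lt_div_iff_of_pos_right hNR).mpr (by linarith)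
  have hp0 : 0 ≤ p 0 := by
    apply div_nonneg ?_ hNR.le
    push_cast; linarith
  have hp3 : p 3 ≤ 1 := by
    rw [div_le_one hNR]; push_cast; linarith
  have hg1 : gainW W N n (j+2) = W (p 1) - W (p 0) := by
    simp only [gainW, hp]; push_cast; ring_nf
  have hg2 : gainW W N n (j+1) = W (p 2) - W (p 1) := by
    simp only [gainW, hp]; push_cast; ring_nf
  have hg3 : gainW W N n j = W (p 3) - W (p 2) := by
    simp only [gainW, hp]; push_cast; try ring_nf
  obtain ⟨c1, hc1, he1⟩ := KKTaux_mvt W hW (hpmono 0 1 (by norm_num)) hp0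
    (le_trans (hpmono 1 3 (by norm_num)).le hp3)
  obtain ⟨c2, hc2, he2⟩ := KKTaux_mvt W hW (hpmono 1 2 (by norm_num))
    (le_trans hp0 (hpmono 0 1 (by norm_num)).le) (le_trans (hpmono 2 3 (by norm_num)).le hp3)
  obtain ⟨c3, hc3, he3⟩ := KKTaux_mvt W hW (hpmono 2 3 (by norm_num))
    (le_trans hp0 (hpmono 0 2 (by norm_num)).le) hp3
  have hd10 : p 1 - p 0 = 1 / N := by simp only [hp]; push_cast; field_simp; try ring
  have hd21 : p 2 - p 1 = 1 / N := by simp only [hp]; push_cast; field_simp; try ring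
  have hd32 : p 3 - p 2 = 1 / N := by simp only [hp]; push_cast; field_simp; try ring
  -- from hle and hc : g1 < g2 where g1 = W p1 - W p0 etc.
  have hg12 : W (p 1) - W (p 0) < W (p 2) - W (p 1) := by
    rw [← hg1, ← hg2]; linarith
  have hW12 : deriv W c1 < deriv W c2 := by
    rw [he1, hd10] at hg12; rw [he2, hd21] at hg12
    have : (0:ℝ) < 1/N := by positivity
    exact lt_of_mul_lt_mul_right (by linarith) this.le
  obtain ⟨x₀, hx₀, hanti, hmono⟩ := hW.1.2.2
  have hx0c2 : x₀ < c2 := by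
    by_contra hx
    push_neg at hx
    have hc1c2 : c1 < c2 := by
      have := hc1.2; have := hc2.1; linarith
    have h1 : c1 ∈ Set.Icc (0:ℝ) x₀ := by
      constructor
      · have := hc1.1; linarith
      · linarith
    have h2 : c2 ∈ Set.Icc (0:ℝ) x₀ := by
      constructor
      · have := hc1.1; linarith
      · exact hx
    have := hanti h1 h2 hc1c2
    linarith
  have hc2c3 : c2 < c3 := lt_of_lt_of_le hc2.2 hc3.1.le
  have hW23 : deriv W c2 < deriv W c3 := by
    apply hmono ⟨hx0c2.le, le_trans hc2.2.le (le_trans (hpmono 2 3 (by norm_num)).le hp3)⟩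
      ⟨le_trans hx0c2.le hc2c3.le, le_trans hc3.2.le hp3⟩ hc2c3
  have : W (p 2) - W (p 1) < W (p 3) - W (p 2) := by
    rw [he2, hd21, he3, hd32]
    have : (0:ℝ) < 1/N := by positivity
    exact mul_lt_mul_of_pos_right hW23 this
  rw [← hg2, ← hg3] at this
  linarith

lemma KKTaux_run (W : ℝ → ℝ) (N n : ℕ) (hW : IsPWF W) (hn1 : 1 ≤ n) (hnN : n ≤ N)
    (hJn : transIdx W N n < n) :
    ∀ j, transIdx W N n ≤ j → j + 1 ≤ n → gainW W N n j ≤ gainW W N n (j + 1) := by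
  have hN : 0 < N := lt_of_lt_of_le hn1 hnN
  obtain ⟨hJ1, hJle, hJcond⟩ := KKTaux_transIdx_mem W N n hn1
  set J := transIdx W N n with hJ
  have hcond : ∑ j' ∈ Finset.Icc 1 J, gainW W N n j' ≤ (J : ℝ) * gainW W N n (J + 1) := by
    rcases hJcond with h | h
    · omega
    · exact h
  -- base case
  have hbase : gainW W N n J ≤ gainW W N n (J + 1) := by
    rcases Nat.lt_or_ge J 2 with h2 | h2
    · -- J = 1
      have hJe : J = 1 := by omega
      rw [hJe] at hcond ⊢
      simpa using hcond
    · -- J ≥ 2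
      have hmin := KKTaux_transIdx_min W N n hn1 (j := J - 1) (by omega) (by omega)
      have hsplit : ∑ j' ∈ Finset.Icc 1 J, gainW W N n j'
          = ∑ j' ∈ Finset.Icc 1 (J-1), gainW W N n j' + gainW W N n J := by
        have : J = (J - 1) + 1 := by omega
        rw [this, Finset.sum_Icc_succ_top (by omega)]
        simp [Nat.add_sub_cancel]
      have hcast : ((J - 1 : ℕ) : ℝ) = (J : ℝ) - 1 := by
        have : (1:ℕ) ≤ J := hJ1
        push_cast [this]; ring
      rw [hcast] at hmin
      have hJ1' : (J:ℝ) - 1 + 1 = J := by ring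
      have hJreal : (0:ℝ) < J := by exact_mod_cast lt_of_lt_of_le Nat.zero_lt_one hJ1
      have h1 : ((J:ℝ) - 1) * gainW W N n J < ∑ j' ∈ Finset.Icc 1 (J-1), gainW W N n j' := by
        have : (J - 1 : ℕ) + 1 = J := by omega
        rw [this] at hmin; exact hmin
      nlinarith [hsplit, hcond]
  -- induction
  intro j hJj hjn
  induction j, hJj using Nat.le_induction with
  | base => exact hbase
  | succ k hk ih =>
    exact KKTaux_gainW_step W N n hW hnN hN (by omega) (by omega) (ih (by omega))

lemma KKTaux_avg (W : ℝ → ℝ) (N n : ℕ) (hW : IsPWF W) (hn1 : 1 ≤ n) (hnN : n ≤ N)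
    {k l : ℕ} (hk1 : 1 ≤ k) (hkl : k ≤ l) (hlJ : l ≤ transIdx W N n) :
    (k : ℝ) * ∑ j' ∈ Finset.Icc 1 l, gainW W N n j'
      ≤ (l : ℝ) * ∑ j' ∈ Finset.Icc 1 k, gainW W N n j' := by
  induction l, hkl using Nat.le_induction with
  | base => exact le_refl _
  | succ l hkle ih =>
    have hlJ' : l ≤ transIdx W N n := by omega
    have ih' := ih hlJ'
    have hmin := KKTaux_transIdx_min W N n hn1 (j := l) (by omega) (by omega)
    have hsplit : ∑ j' ∈ Finset.Icc 1 (l+1), gainW W N n j'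
        = ∑ j' ∈ Finset.Icc 1 l, gainW W N n j' + gainW W N n (l+1) :=
      Finset.sum_Icc_succ_top (by omega) _
    have hl1 : (1:ℝ) ≤ l := by exact_mod_cast (le_trans hk1 hkle)
    have hk0 : (0:ℝ) ≤ k := by positivity
    have hkR : (k:ℝ) ≤ l := by exact_mod_cast hkle
    push_cast
    rw [hsplit]
    -- k*(S_l + h_{l+1}) ≤ (l+1) * S_k
    -- from: l*h_{l+1} < S_l (hmin), k S_l ≤ l S_k (ih'), so k h_{l+1} ≤ S_k since l > 0
    have hkh : (k:ℝ) * gainW W N n (l+1) * l ≤ (l:ℝ) * ∑ j' ∈ Finset.Icc 1 k, gainW W N n j' := by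
      calc (k:ℝ) * gainW W N n (l+1) * l = (k:ℝ) * ((l:ℝ) * gainW W N n (l+1)) := by ring
      _ ≤ (k:ℝ) * ∑ j' ∈ Finset.Icc 1 l, gainW W N n j' := by
          exact mul_le_mul_of_nonneg_left hmin.le hk0
      _ ≤ (l:ℝ) * ∑ j' ∈ Finset.Icc 1 k, gainW W N n j' := ih'
    have hkh' : (k:ℝ) * gainW W N n (l+1) ≤ ∑ j' ∈ Finset.Icc 1 k, gainW W N n j' := by
      have hlpos : (0:ℝ) < l := by linarith
      nlinarith [hkh]
    nlinarith [ih', hkh']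

end KKTaux

/-- with `b̄ = 1/α`, the multipliers
`μ_j = −(b̄/v)·(∑_{j'} (y*_{j'})^{b̄})·(∑_{j'≥j} h⁺_{j'}) + b̄·∑_{j'≥j} (y*_{j'})^{b̄−1}` and
`Λ = −(b̄/v)·∑_{j'} (y*_{j'})^{b̄}` satisfy, together with `y*`, the KKT conditions
(a)–(e) of the gain subproblem. -/
theorem gainOpt_satisfies_KKT (W : ℝ → ℝ) (N n : ℕ) (α v : ℝ) (μ : ℕ → ℝ) (Λ : ℝ)
    (hW : IsPWF W) (hn1 : 1 ≤ n) (hnN : n ≤ N)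
    (hα0 : 0 < α) (hα1 : α < 1) (hv : 0 < v)
    (hμ : ∀ j ∈ Finset.Icc 1 n, μ j =
      -((1 / α) / v) * (∑ j' ∈ Finset.Icc 1 n, gainOpt W N n α v j' ^ (1 / α)) *
          (∑ j' ∈ Finset.Icc j n, gainW W N n j') +
        (1 / α) * ∑ j' ∈ Finset.Icc j n, gainOpt W N n α v j' ^ (1 / α - 1))
    (hΛ : Λ = -((1 / α) / v) * ∑ j' ∈ Finset.Icc 1 n, gainOpt W N n α v j' ^ (1 / α)) :
    -- (a) stationarity for j = 1, …, n−1
    (∀ j ∈ Finset.Icc 1 (n - 1),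
      (1 / α) * gainOpt W N n α v j ^ (1 / α - 1) + μ (j + 1) - μ j + Λ * gainW W N n j = 0) ∧
    -- (b) stationarity for j = n
    (1 / α) * gainOpt W N n α v n ^ (1 / α - 1) - μ n + Λ * gainW W N n n = 0 ∧
    -- (c) complementary slackness
    (∀ j ∈ Finset.Icc 1 (n - 1),
      μ (j + 1) * (gainOpt W N n α v j - gainOpt W N n α v (j + 1)) = 0) ∧
    μ 1 * gainOpt W N n α v 1 = 0 ∧
    -- (d) equality constraint
    ∑ j ∈ Finset.Icc 1 n, gainW W N n j * gainOpt W N n α v j = v ∧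
    -- (e) sign conditions and monotonicity
    (∀ j ∈ Finset.Icc 1 n, 0 ≤ μ j) ∧
    0 ≤ gainOpt W N n α v 1 ∧
    ∀ j ∈ Finset.Icc 1 (n - 1), gainOpt W N n α v j ≤ gainOpt W N n α v (j + 1) := by
  have hN : 0 < N := lt_of_lt_of_le hn1 hnN
  obtain ⟨hJ1, hJn, hJcond⟩ := KKTaux_transIdx_mem W N n hn1
  set J := transIdx W N n with hJdef
  have hpos : ∀ j : ℕ, 1 ≤ j → j ≤ n → 0 < gainW W N n j :=
    fun j h1 h2 => KKTaux_gainW_pos W N n hW hnN hN h1 h2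
  have h1α : (0:ℝ) < 1 - α := by linarith
  have hv' : v ≠ 0 := ne_of_gt hv
  have hα' : α ≠ 0 := ne_of_gt hα0
  set β := α / (1 - α) with hβdef
  set γ := (1:ℝ) / (1 - α) with hγdef
  have hβpos : 0 < β := div_pos hα0 h1α
  have hγpos : 0 < γ := div_pos one_pos h1α
  have hγβ : γ = β + 1 := by rw [hβdef, hγdef]; field_simp; ring
  have hβe : β * (1/α - 1) = 1 := by rw [hβdef]; field_simp
  have hβb : β * (1/α) = γ := by rw [hβdef, hγdef]; field_simp
  set S := ∑ j' ∈ Finset.Icc 1 J, gainW W N n j' with hSdef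
  have hSpos : 0 < S := by
    rw [hSdef]
    apply Finset.sum_pos
    · intro i hi
      obtain ⟨h1, h2⟩ := Finset.mem_Icc.mp hi
      exact hpos i h1 (le_trans h2 hJn)
    · exact ⟨1, Finset.mem_Icc.mpr ⟨le_rfl, hJ1⟩⟩
  set Q := ∑ j' ∈ Finset.Icc (J+1) n, gainW W N n j' ^ γ with hQdef
  have hQnn : 0 ≤ Q := Finset.sum_nonneg fun i hi => by
    obtain ⟨h1, h2⟩ := Finset.mem_Icc.mp hi
    exact Real.rpow_nonneg (hpos i (by omega) h2).le _
  have hJR : (0:ℝ) < J := by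
    have : (1:ℝ) ≤ (J:ℝ) := by exact_mod_cast hJ1
    linarith
  set D := S ^ γ + (J:ℝ) ^ β * Q with hDdef
  have hDpos : 0 < D := by
    have h1 := Real.rpow_pos_of_pos hSpos γ
    have h2 : 0 ≤ (J:ℝ)^β * Q := mul_nonneg (Real.rpow_nonneg hJR.le _) hQnn
    rw [hDdef]; linarith
  set Y := gainY W N n α v with hYdef0
  have hYeq : Y = v * S ^ β / D := by
    rw [hYdef0, gainY, ← hJdef, ← hβdef, ← hγdef, ← hSdef, ← hQdef, ← hDdef]
  have hYpos : 0 < Y := by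
    rw [hYeq]
    exact div_pos (mul_pos hv (Real.rpow_pos_of_pos hSpos β)) hDpos
  -- pointwise values
  have hyle : ∀ j : ℕ, j ≤ J → gainOpt W N n α v j = Y := by
    intro j hj
    simp only [gainOpt]
    rw [← hJdef, if_pos hj, ← hYdef0]
  have hygt : ∀ j : ℕ, J < j → gainOpt W N n α v j = ((J:ℝ) * gainW W N n j / S) ^ β * Y := by
    intro j hj
    simp only [gainOpt]
    rw [← hJdef, if_neg (by omega), ← hβdef, ← hSdef, ← hYdef0]
  have hbpos : ∀ j : ℕ, J < j → j ≤ n → 0 < (J:ℝ) * gainW W N n j / S :=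
    fun j h1 h2 => div_pos (mul_pos hJR (hpos j (by omega) h2)) hSpos
  have hpow1 : ∀ j : ℕ, J < j → j ≤ n →
      gainOpt W N n α v j ^ (1/α - 1) = ((J:ℝ) * gainW W N n j / S) * Y ^ (1/α - 1) := by
    intro j h1 h2
    rw [hygt j h1, Real.mul_rpow (Real.rpow_nonneg (hbpos j h1 h2).le _) hYpos.le,
      ← Real.rpow_mul (hbpos j h1 h2).le, hβe, Real.rpow_one]
  have hpow2 : ∀ j : ℕ, J < j → j ≤ n →
      gainOpt W N n α v j ^ (1/α) = ((J:ℝ)/S)^γ * (gainW W N n j)^γ * Y ^ (1/α) := by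
    intro j h1 h2
    rw [hygt j h1, Real.mul_rpow (Real.rpow_nonneg (hbpos j h1 h2).le _) hYpos.le,
      ← Real.rpow_mul (hbpos j h1 h2).le, hβb,
      show (J:ℝ) * gainW W N n j / S = ((J:ℝ)/S) * gainW W N n j by ring,
      Real.mul_rpow (div_nonneg hJR.le hSpos.le) (hpos j (by omega) h2).le]
  have hhy : ∀ j : ℕ, J < j → j ≤ n →
      gainW W N n j * gainOpt W N n α v j = ((J:ℝ)/S)^β * (gainW W N n j)^γ * Y := by
    intro j h1 h2
    have hh := hpos j (by omega) h2
    rw [hygt j h1, show (J:ℝ) * gainW W N n j / S = ((J:ℝ)/S) * gainW W N n j by ring,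
      Real.mul_rpow (div_nonneg hJR.le hSpos.le) hh.le, hγβ, Real.rpow_add hh, Real.rpow_one]
    ring
  -- sum splitting
  have hsplit : ∀ (f : ℕ → ℝ) (j : ℕ), 1 ≤ j → j ≤ J →
      ∑ x ∈ Finset.Icc j n, f x
        = ∑ x ∈ Finset.Icc j J, f x + ∑ x ∈ Finset.Icc (J+1) n, f x := by
    intro f j hj1 hjJ
    obtain ⟨i, rfl⟩ : ∃ i, j = i + 1 := ⟨j - 1, by omega⟩
    rw [Finset.Icc_add_one_left_eq_Ioc, Finset.Icc_add_one_left_eq_Ioc, Finset.Icc_add_one_left_eq_Ioc]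
    exact (Finset.sum_Ioc_consecutive _ (by omega) hJn).symm
  have hstep : ∀ (f : ℕ → ℝ) (j : ℕ), j ≤ n →
      ∑ x ∈ Finset.Icc j n, f x = f j + ∑ x ∈ Finset.Icc (j+1) n, f x := by
    intro f j hjn
    rw [← Finset.Ioc_insert_left hjn, Finset.sum_insert (by simp), Finset.Icc_add_one_left_eq_Ioc]
  have hcount : ∀ (j : ℕ) (c : ℝ), 1 ≤ j → j ≤ J →
      ∑ _x ∈ Finset.Icc j J, c = ((J:ℝ) - j + 1) * c := by
    intro j c hj1 hjJ
    rw [Finset.sum_const, nsmul_eq_mul, Nat.card_Icc, Nat.cast_sub (by omega)]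
    push_cast; ring
  -- sum of h*y
  have hdsum : ∑ j ∈ Finset.Icc 1 n, gainW W N n j * gainOpt W N n α v j
      = (S + ((J:ℝ)/S)^β * Q) * Y := by
    rw [hsplit (fun x => gainW W N n x * gainOpt W N n α v x) 1 le_rfl hJ1]
    have e1 : ∑ x ∈ Finset.Icc 1 J, gainW W N n x * gainOpt W N n α v x = S * Y := by
      rw [hSdef, Finset.sum_mul]
      exact Finset.sum_congr rfl fun x hx => by
        rw [hyle x (Finset.mem_Icc.mp hx).2]
    have e2 : ∑ x ∈ Finset.Icc (J+1) n, gainW W N n x * gainOpt W N n α v x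
        = ((J:ℝ)/S)^β * Q * Y := by
      rw [hQdef, Finset.mul_sum, Finset.sum_mul]
      exact Finset.sum_congr rfl fun x hx => by
        obtain ⟨h1, h2⟩ := Finset.mem_Icc.mp hx
        rw [hhy x (by omega) h2]
    rw [e1, e2]; ring
  have hDalt : S^β * (S + ((J:ℝ)/S)^β * Q) = D := by
    have e1 : S^β * S = S^γ := by
      rw [hγβ, Real.rpow_add hSpos, Real.rpow_one]
    have e2 : S^β * ((J:ℝ)/S)^β = (J:ℝ)^β := by
      rw [← Real.mul_rpow hSpos.le (div_nonneg hJR.le hSpos.le),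
        mul_div_cancel₀ _ hSpos.ne']
    calc S^β * (S + ((J:ℝ)/S)^β * Q) = S^β * S + (S^β * ((J:ℝ)/S)^β) * Q := by ring
      _ = D := by rw [e1, e2, hDdef]
  have hdv : (S + ((J:ℝ)/S)^β * Q) * Y = v := by
    rw [hYeq]
    field_simp
    linear_combination hDalt
  -- sum of y^(1/α)
  have hYsplit : Y^((1:ℝ)/α) = Y^(1/α - 1) * Y := by
    have h := Real.rpow_add hYpos (1/α - 1) 1
    rw [Real.rpow_one, show (1:ℝ)/α - 1 + 1 = 1/α by ring] at h
    exact h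
  have hfact : (J:ℝ) + ((J:ℝ)/S)^γ * Q = ((J:ℝ)/S) * (S + ((J:ℝ)/S)^β * Q) := by
    have e1 : ((J:ℝ)/S) * ((J:ℝ)/S)^β = ((J:ℝ)/S)^γ := by
      rw [hγβ, Real.rpow_add (div_pos hJR hSpos), Real.rpow_one]; ring
    have e2 : (J:ℝ)/S * S = (J:ℝ) := div_mul_cancel₀ _ hSpos.ne'
    calc (J:ℝ) + ((J:ℝ)/S)^γ * Q
        = ((J:ℝ)/S * S) + (((J:ℝ)/S) * ((J:ℝ)/S)^β) * Q := by rw [e1, e2]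
      _ = ((J:ℝ)/S) * (S + ((J:ℝ)/S)^β * Q) := by ring
  have hTsum : ∑ j' ∈ Finset.Icc 1 n, gainOpt W N n α v j' ^ (1/α)
      = ((J:ℝ) + ((J:ℝ)/S)^γ * Q) * Y^((1:ℝ)/α) := by
    rw [hsplit (fun x => gainOpt W N n α v x ^ (1/α)) 1 le_rfl hJ1]
    have e1 : ∑ x ∈ Finset.Icc 1 J, gainOpt W N n α v x ^ (1/α) = (J:ℝ) * Y^((1:ℝ)/α) := by
      rw [show ∑ x ∈ Finset.Icc 1 J, gainOpt W N n α v x ^ (1/α)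
          = ∑ _x ∈ Finset.Icc 1 J, Y^((1:ℝ)/α) from
        Finset.sum_congr rfl fun x hx => by rw [hyle x (Finset.mem_Icc.mp hx).2]]
      rw [hcount 1 _ le_rfl hJ1]; push_cast; ring
    have e2 : ∑ x ∈ Finset.Icc (J+1) n, gainOpt W N n α v x ^ (1/α)
        = ((J:ℝ)/S)^γ * Q * Y^((1:ℝ)/α) := by
      rw [hQdef, Finset.mul_sum, Finset.sum_mul]
      exact Finset.sum_congr rfl fun x hx => by
        obtain ⟨h1, h2⟩ := Finset.mem_Icc.mp hx
        rw [hpow2 x (by omega) h2]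
    rw [e1, e2]; ring
  have hTv : ∑ j' ∈ Finset.Icc 1 n, gainOpt W N n α v j' ^ (1/α)
      = Y^(1/α - 1) * ((J:ℝ)/S) * v := by
    rw [hTsum, hfact, hYsplit, ← hdv]; ring
  -- simplified multiplier formula
  have hμ' : ∀ j ∈ Finset.Icc 1 n, μ j =
      -((1/α) * Y^(1/α - 1) * ((J:ℝ)/S)) * (∑ j' ∈ Finset.Icc j n, gainW W N n j') +
        (1/α) * ∑ j' ∈ Finset.Icc j n, gainOpt W N n α v j' ^ (1/α - 1) := by
    intro j hj
    rw [hμ j hj, hTv]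
    field_simp
  have hΛ' : Λ = -((1/α) * Y^(1/α - 1) * ((J:ℝ)/S)) := by
    rw [hΛ, hTv]
    field_simp
  have hμ0 : ∀ j : ℕ, J < j → j ≤ n → μ j = 0 := by
    intro j h1 h2
    rw [hμ' j (Finset.mem_Icc.mpr ⟨by omega, h2⟩)]
    have hB : ∑ x ∈ Finset.Icc j n, gainOpt W N n α v x ^ (1/α - 1)
        = ((J:ℝ)/S) * Y^(1/α - 1) * ∑ x ∈ Finset.Icc j n, gainW W N n x := by
      rw [Finset.mul_sum]
      exact Finset.sum_congr rfl fun x hx => by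
        obtain ⟨hx1, hx2⟩ := Finset.mem_Icc.mp hx
        rw [hpow1 x (by omega) hx2]; ring
    rw [hB]; ring
  have hμval : ∀ j : ℕ, 1 ≤ j → j ≤ J → μ j =
      (1/α) * Y^(1/α - 1) *
        (((J:ℝ) - j + 1) - ((J:ℝ)/S) * ∑ x ∈ Finset.Icc j J, gainW W N n x) := by
    intro j h1 h2
    rw [hμ' j (Finset.mem_Icc.mpr ⟨h1, le_trans h2 hJn⟩),
      hsplit (fun x => gainW W N n x) j h1 h2,
      hsplit (fun x => gainOpt W N n α v x ^ (1/α - 1)) j h1 h2]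
    have e1 : ∑ x ∈ Finset.Icc j J, gainOpt W N n α v x ^ (1/α - 1)
        = ((J:ℝ) - j + 1) * Y^(1/α - 1) := by
      rw [show ∑ x ∈ Finset.Icc j J, gainOpt W N n α v x ^ (1/α - 1)
          = ∑ _x ∈ Finset.Icc j J, Y^(1/α - 1) from
        Finset.sum_congr rfl fun x hx => by rw [hyle x (Finset.mem_Icc.mp hx).2]]
      exact hcount j _ h1 h2
    have e2 : ∑ x ∈ Finset.Icc (J+1) n, gainOpt W N n α v x ^ (1/α - 1)
        = ((J:ℝ)/S) * Y^(1/α - 1) * ∑ x ∈ Finset.Icc (J+1) n, gainW W N n x := by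
      rw [Finset.mul_sum]
      exact Finset.sum_congr rfl fun x hx => by
        obtain ⟨hx1, hx2⟩ := Finset.mem_Icc.mp hx
        rw [hpow1 x (by omega) hx2]; ring
    rw [e1, e2]; ring
  have hμ1 : μ 1 = 0 := by
    rw [hμval 1 le_rfl hJ1, ← hSdef, div_mul_cancel₀ _ hSpos.ne']
    push_cast; ring
  refine ⟨?_, ?_, ?_, ?_, ?_, ?_, ?_, ?_⟩
  · -- (a)
    intro j hj
    obtain ⟨hj1, hj2⟩ := Finset.mem_Icc.mp hj
    have hjn : j ≤ n := by omega
    have hj1n : j + 1 ≤ n := by omega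
    rw [hμ' j (Finset.mem_Icc.mpr ⟨hj1, hjn⟩), hμ' (j+1) (Finset.mem_Icc.mpr ⟨by omega, hj1n⟩),
      hΛ', hstep (fun x => gainW W N n x) j hjn,
      hstep (fun x => gainOpt W N n α v x ^ (1/α - 1)) j hjn]
    ring
  · -- (b)
    rw [hμ' n (Finset.mem_Icc.mpr ⟨hn1, le_rfl⟩), hΛ', Finset.Icc_self,
      Finset.sum_singleton, Finset.sum_singleton]
    ring
  · -- (c)
    intro j hj
    obtain ⟨hj1, hj2⟩ := Finset.mem_Icc.mp hj
    rcases Nat.lt_or_ge J (j+1) with h | h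
    · rw [hμ0 (j+1) h (by omega)]; ring
    · rw [hyle j (by omega), hyle (j+1) h]; ring
  · rw [hμ1]; ring
  · rw [hdsum, hdv]
  · -- μ ≥ 0
    intro j hj
    obtain ⟨hj1, hj2⟩ := Finset.mem_Icc.mp hj
    rcases Nat.lt_or_ge J j with h | h
    · rw [hμ0 j h hj2]
    · rw [hμval j hj1 h]
      have hYe : 0 < Y^(1/α - 1) := Real.rpow_pos_of_pos hYpos _
      have hSj : S = ∑ x ∈ Finset.Icc 1 (j-1), gainW W N n x
          + ∑ x ∈ Finset.Icc j J, gainW W N n x := by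
        obtain ⟨i, rfl⟩ : ∃ i, j = i + 1 := ⟨j - 1, by omega⟩
        have h0 : Finset.Icc 1 J = Finset.Ioc 0 J := Finset.Icc_add_one_left_eq_Ioc 0 J
        have h1 : Finset.Icc 1 (i + 1 - 1) = Finset.Ioc 0 i := Finset.Icc_add_one_left_eq_Ioc 0 i
        have h2 : Finset.Icc (i + 1) J = Finset.Ioc i J := Finset.Icc_add_one_left_eq_Ioc i J
        rw [hSdef, h0, h1, h2]
        exact (Finset.sum_Ioc_consecutive _ (by omega) (by omega)).symm
      have havg : ((j:ℝ) - 1) * S ≤ (J:ℝ) * ∑ x ∈ Finset.Icc 1 (j-1), gainW W N n x := by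
        rcases Nat.lt_or_ge j 2 with hj' | hj'
        · have : j = 1 := by omega
          subst this
          simp
        · have h' := KKTaux_avg W N n hW hn1 hnN (k := j - 1) (l := J)
            (by omega) (by omega) hJdef.le
          rw [← hSdef] at h'
          have hc : ((j - 1 : ℕ) : ℝ) = (j:ℝ) - 1 := by
            rw [Nat.cast_sub (by omega)]; norm_num
          rw [hc] at h'
          exact h'
      have hkey : 0 ≤ ((J:ℝ) - j + 1) - ((J:ℝ)/S) * ∑ x ∈ Finset.Icc j J, gainW W N n x := by
        rw [sub_nonneg, div_mul_eq_mul_div, div_le_iff₀ hSpos]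
        rw [hSj] at havg ⊢
        linarith [havg]
      have h1α' : (0:ℝ) ≤ 1/α := by positivity
      exact mul_nonneg (mul_nonneg h1α' hYe.le) hkey
  · rw [hyle 1 hJ1]; exact hYpos.le
  · -- monotonicity
    intro j hj
    obtain ⟨hj1, hj2⟩ := Finset.mem_Icc.mp hj
    have hj1n : j + 1 ≤ n := by omega
    rcases Nat.lt_or_ge J j with h | h
    · -- J < j
      have hJn' : J < n := by omega
      rw [hygt j h, hygt (j+1) (by omega)]
      apply mul_le_mul_of_nonneg_right _ hYpos.le
      apply Real.rpow_le_rpow (hbpos j h (by omega)).le _ hβpos.le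
      have hrun := KKTaux_run W N n hW hn1 hnN hJn' j (by omega) hj1n
      gcongr
    · rcases Nat.lt_or_ge J (j+1) with h' | h'
      · -- j = J
        have hjJ : j = J := by omega
        have hJn' : J < n := by omega
        have hcond : S ≤ (J:ℝ) * gainW W N n (J+1) := by
          rcases hJcond with hc | hc
          · omega
          · exact hc
        rw [hyle j h, hygt (j+1) h']
        have hb1 : 1 ≤ (J:ℝ) * gainW W N n (j+1) / S := by
          rw [le_div_iff₀ hSpos, one_mul, hjJ]
          exact hcond
        calc Y = 1 * Y := (one_mul Y).symm
          _ ≤ ((J:ℝ) * gainW W N n (j+1) / S)^β * Y :=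
            mul_le_mul_of_nonneg_right (Real.one_le_rpow hb1 hβpos.le) hYpos.le
      · rw [hyle j h, hyle (j+1) h']
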